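/- Let H be an essentially 3-edge-connected multigraph. If the core co(H) has a spanning closed trail, then H has a dominating closed trail. -/

import Mathlib

/-- A multigraph on vertex type `V` with edge type `E`: each edge is assigned an
unordered pair of endpoints (possibly equal, for loops). -/
structure Multigraph (V : Type*) (E : Type*) where
  inc : E → Sym2 V

namespace Multigraph

open scoped Classical

variable {V E : Type*} {M : Multigraph V E}

/-- Walks in a multigraph. -/
inductive Walk (M : Multigraph V E) : V → V → Type _ where
  | nil (v : V) : Walk M v v
  | cons {u v w : V} (e : E) (h : M.inc e = s(u, v)) (p : Walk M v w) : Walk M u w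

/-- The list of edges of a walk. -/
def Walk.edges : ∀ {u v : V}, M.Walk u v → List E
  | _, _, .nil _ => []
  | _, _, .cons e _ p => e :: p.edges

/-- The list of vertices visited by a walk, in order. -/
def Walk.support : ∀ {u v : V}, M.Walk u v → List V
  | _, v, .nil _ => [v]
  | u, _, .cons _ _ p => u :: p.support

/-- A trail is a walk with no repeated edge. -/
def Walk.IsTrail {u v : V} (p : M.Walk u v) : Prop := p.edges.Nodup

/-- The interior vertices of a walk (all vertices except the two ends). -/
def Walk.interior {u v : V} (p : M.Walk u v) : List V := p.support.tail.dropLast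

/-- Two vertices are reachable if joined by a walk. -/
def Reachable (M : Multigraph V E) (u v : V) : Prop := Nonempty (M.Walk u v)

/-- Reachability avoiding a set `R` of edges. -/
def ReachableOff (M : Multigraph V E) (R : Set E) (u v : V) : Prop :=
  ∃ p : M.Walk u v, ∀ e ∈ p.edges, e ∉ R

/-- A multigraph is connected if every two vertices are joined by a walk. -/
def Connected (M : Multigraph V E) : Prop := ∀ u v : V, M.Reachable u v

/-- A multigraph is `k`-edge-connected if it stays connected after the removal of
any set of fewer than `k` edges. -/
def KEdgeConnected (M : Multigraph V E) (k : ℕ) : Prop :=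
  ∀ R : Finset E, R.card < k → ∀ u v : V, M.ReachableOff (↑R) u v

/-- An edge-cut `R` is essential if after its removal two remaining edges lie in
different components. -/
def IsEssentialCut (M : Multigraph V E) (R : Finset E) : Prop :=
  ∃ (e f : E) (u v : V), e ∉ R ∧ f ∉ R ∧ u ∈ M.inc e ∧ v ∈ M.inc f ∧
    ¬ M.ReachableOff (↑R) u v

/-- A multigraph is essentially `k`-edge-connected if every essential edge-cut has
size at least `k`. -/
def EssentiallyKEdgeConnected (M : Multigraph V E) (k : ℕ) : Prop :=
  ∀ R : Finset E, M.IsEssentialCut R → k ≤ R.card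

/-- The line graph of a multigraph: vertices are the edges, adjacent when sharing
an endpoint. -/
def lineGraph (M : Multigraph V E) : SimpleGraph E where
  Adj e f := e ≠ f ∧ ∃ v : V, v ∈ M.inc e ∧ v ∈ M.inc f
  symm := by
    constructor
    rintro e f ⟨hne, v, hv1, hv2⟩
    exact ⟨hne.symm, v, hv2, hv1⟩
  loopless := by constructor; rintro e ⟨hne, -⟩; exact hne rfl

/-- The degree of a vertex: the number of edge-ends at it (loops count twice). -/
noncomputable def degree (M : Multigraph V E) [Fintype E] (v : V) : ℕ :=
  ∑ e : E, Sym2.lift ⟨fun a b => (if a = v then 1 else 0) + (if b = v then 1 else 0),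
    fun a b => by ring⟩ (M.inc e)

/-- A pendant edge: an edge with an endpoint of degree `1`. -/
def IsPendant (M : Multigraph V E) [Fintype E] (e : E) : Prop :=
  ∃ v : V, v ∈ M.inc e ∧ M.degree v = 1

/-- A closed trail whose vertex set dominates every edge. -/
def HasDominatingClosedTrail (M : Multigraph V E) : Prop :=
  ∃ (v : V) (p : M.Walk v v), p.IsTrail ∧
    ∀ e : E, ∃ x : V, x ∈ M.inc e ∧ x ∈ p.support

/-- A closed trail through every vertex. -/
def HasSpanningClosedTrail (M : Multigraph V E) : Prop :=
  ∃ (v : V) (p : M.Walk v v), p.IsTrail ∧ ∀ x : V, x ∈ p.support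

/-- An internally dominating `(e₁,e₂)`-trail: a trail with first edge `e₁` and last
edge `e₂` whose interior vertices dominate every edge. -/
def HasIDT (M : Multigraph V E) (e₁ e₂ : E) : Prop :=
  ∃ (u v : V) (p : M.Walk u v), p.IsTrail ∧
    p.edges.head? = some e₁ ∧ p.edges.getLast? = some e₂ ∧
    ∀ e : E, ∃ x : V, x ∈ M.inc e ∧ x ∈ p.interior

end Multigraph


namespace Multigraph

open scoped Classical

variable {V E VK EK : Type*}

/-- The number of ends of the edge `e` at the vertex `v`. -/
noncomputable def endCount (M : Multigraph V E) (v : V) (e : E) : ℕ :=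
  Sym2.lift ⟨fun a b => (if a = v then 1 else 0) + (if b = v then 1 else 0),
    fun a b => by ring⟩ (M.inc e)

/-- The degree of `v` in the multigraph obtained from `M` by deleting all pendant
edges. -/
noncomputable def degreeNP (M : Multigraph V E) [Fintype E] (v : V) : ℕ :=
  ∑ e : E, if M.IsPendant e then 0 else M.endCount v e

/-- `s` is the edge set of a thread of `M` from `u` to `v`: a nontrivial trail
consisting of non-pendant edges between two vertices of branch degree at least `3`
(in `M` minus its pendant edges) all of whose interior vertices have degree `2`
there. -/
def IsThread (M : Multigraph V E) [Fintype E] (u v : V) (s : Finset E) : Prop :=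
  ∃ p : M.Walk u v, p.IsTrail ∧ p.edges ≠ [] ∧ (∀ e ∈ p.edges, ¬ M.IsPendant e) ∧
    p.edges.toFinset = s ∧ 3 ≤ M.degreeNP u ∧ 3 ≤ M.degreeNP v ∧
    ∀ x ∈ p.interior, M.degreeNP x = 2

/-- `φ, ψ` witness that `K` is the core of `M`: `φ` identifies the vertices of `K`
with the vertices of branch degree at least `3` of `M`, and `ψ` assigns to each
edge of `K` the edge set of a corresponding thread of `M`, these threads
partitioning the non-pendant edges of `M`. -/
def IsCoreWitness (K : Multigraph VK EK) (M : Multigraph V E) [Fintype E]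
    (φ : VK → V) (ψ : EK → Finset E) : Prop :=
  Function.Injective φ ∧
  (∀ x : VK, 3 ≤ M.degreeNP (φ x)) ∧
  (∀ v : V, 3 ≤ M.degreeNP v → ∃ x : VK, φ x = v) ∧
  (∀ c : EK, ∃ x y : VK, K.inc c = s(x, y) ∧ M.IsThread (φ x) (φ y) (ψ c)) ∧
  (∀ e : E, ¬ M.IsPendant e → ∃! c : EK, e ∈ ψ c)

/-- `K` is the core of `M`, obtained by deleting all pendant edges and suppressing
all vertices of degree `2`. -/
def IsCoreOf (K : Multigraph VK EK) (M : Multigraph V E) [Fintype E] : Prop :=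
  ∃ (φ : VK → V) (ψ : EK → Finset E), IsCoreWitness K M φ ψ

end Multigraph


namespace Multigraph

open scoped Classical

variable {V E : Type*} {M : Multigraph V E}

lemma exists_rep (q : Sym2 V) : ∃ a b, q = s(a, b) :=
  Sym2.inductionOn (f := fun q => ∃ a b, q = s(a, b)) q (fun a b => ⟨a, b, rfl⟩)

lemma endCount_eq {a b : V} {e : E} (h : M.inc e = s(a, b)) (v : V) :
    M.endCount v e = (if a = v then 1 else 0) + (if b = v then 1 else 0) := by
  simp [endCount, h]

lemma one_le_endCount {v : V} {e : E} (h : v ∈ M.inc e) : 1 ≤ M.endCount v e := by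
  obtain ⟨a, b, hab⟩ := exists_rep (M.inc e)
  rw [hab, Sym2.mem_iff] at h
  rw [endCount_eq hab]
  rcases h with rfl | rfl <;> simp

lemma endCount_eq_zero {v : V} {e : E} (h : v ∉ M.inc e) : M.endCount v e = 0 := by
  obtain ⟨a, b, hab⟩ := exists_rep (M.inc e)
  rw [hab, Sym2.mem_iff] at h
  push_neg at h
  rw [endCount_eq hab]
  simp [Ne.symm h.1, Ne.symm h.2]

lemma degree_eq_sum [Fintype E] (v : V) : M.degree v = ∑ e : E, M.endCount v e := rfl

lemma degreeNP_le_degree [Fintype E] (v : V) : M.degreeNP v ≤ M.degree v := by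
  rw [degree_eq_sum, degreeNP]
  exact Finset.sum_le_sum fun e _ => by split_ifs <;> simp

lemma eq_of_degree_one [Fintype E] {a : V} {g g' : E} (h : M.degree a = 1)
    (hg : a ∈ M.inc g) (hg' : a ∈ M.inc g') : g = g' := by
  by_contra hne
  have h2 : M.endCount a g + M.endCount a g' ≤ M.degree a := by
    rw [degree_eq_sum]
    calc M.endCount a g + M.endCount a g'
        = ∑ e ∈ ({g, g'} : Finset E), M.endCount a e := (Finset.sum_pair hne).symm
      _ ≤ _ := Finset.sum_le_sum_of_subset (Finset.subset_univ _)
  have := one_le_endCount hg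
  have := one_le_endCount hg'
  omega

lemma card_np_le [Fintype E] {a : V} {n : ℕ} (h : M.degreeNP a ≤ n) :
    (Finset.univ.filter fun g : E => ¬ M.IsPendant g ∧ a ∈ M.inc g).card ≤ n := by
  classical
  refine le_trans ?_ h
  rw [degreeNP]
  calc (Finset.univ.filter fun g : E => ¬ M.IsPendant g ∧ a ∈ M.inc g).card
      = ∑ g ∈ Finset.univ.filter fun g : E => ¬ M.IsPendant g ∧ a ∈ M.inc g, 1 := by
        simp
    _ ≤ ∑ g ∈ Finset.univ.filter fun g : E => ¬ M.IsPendant g ∧ a ∈ M.inc g,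
          (if M.IsPendant g then 0 else M.endCount a g) := by
        refine Finset.sum_le_sum fun g hg => ?_
        simp only [Finset.mem_filter] at hg
        rw [if_neg hg.2.1]
        exact one_le_endCount hg.2.2
    _ ≤ _ := Finset.sum_le_sum_of_subset (Finset.filter_subset _ _)

lemma card_np_ne_le [Fintype E] {a : V} {e : E} (h2 : M.degreeNP a ≤ 2)
    (he : ¬ M.IsPendant e) (ha : a ∈ M.inc e) :
    (Finset.univ.filter fun g : E => ¬ M.IsPendant g ∧ a ∈ M.inc g ∧ g ≠ e).card ≤ 1 := by
  classical
  have hsub : insert e (Finset.univ.filter fun g : E => ¬ M.IsPendant g ∧ a ∈ M.inc g ∧ g ≠ e)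
      ⊆ Finset.univ.filter fun g : E => ¬ M.IsPendant g ∧ a ∈ M.inc g := by
    intro g hg
    simp only [Finset.mem_insert, Finset.mem_filter] at hg ⊢
    rcases hg with rfl | hg
    · exact ⟨Finset.mem_univ _, he, ha⟩
    · exact ⟨Finset.mem_univ _, hg.2.1, hg.2.2.1⟩
  have hnot : e ∉ (Finset.univ.filter fun g : E => ¬ M.IsPendant g ∧ a ∈ M.inc g ∧ g ≠ e) := by
    simp
  have := Finset.card_le_card hsub
  rw [Finset.card_insert_of_notMem hnot] at this
  have := card_np_le h2
  omega

lemma exists_np_not_mem [Fintype E] {x : V} {R : Finset E} (hx : 3 ≤ M.degreeNP x)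
    (hR : ∀ f ∈ R, M.endCount x f ≤ 1) (hcard : R.card ≤ 2) :
    ∃ f, ¬ M.IsPendant f ∧ f ∉ R ∧ x ∈ M.inc f := by
  classical
  by_contra hcon
  push_neg at hcon
  have hzero : ∀ f ∈ Finset.univ \ R, (if M.IsPendant f then 0 else M.endCount x f) = 0 := by
    intro f hf
    simp only [Finset.mem_sdiff] at hf
    split_ifs with hp
    · rfl
    · exact endCount_eq_zero (hcon f hp hf.2)
  have h1 : M.degreeNP x = ∑ f ∈ R, (if M.IsPendant f then 0 else M.endCount x f) := by
    rw [degreeNP, ← Finset.sum_subset (Finset.subset_univ R)]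
    intro f hf hfr
    exact hzero f (Finset.mem_sdiff.mpr ⟨hf, hfr⟩)
  have h2 : ∑ f ∈ R, (if M.IsPendant f then 0 else M.endCount x f) ≤ ∑ f ∈ R, 1 := by
    refine Finset.sum_le_sum fun f hf => ?_
    split_ifs
    · omega
    · exact hR f hf
  simp only [Finset.sum_const, smul_eq_mul, mul_one] at h2
  omega

def Walk.append : ∀ {u v w : V}, M.Walk u v → M.Walk v w → M.Walk u w
  | _, _, _, .nil _, q => q
  | _, _, _, .cons e h p, q => .cons e h (p.append q)

lemma Walk.edges_append : ∀ {u v w : V} (p : M.Walk u v) (q : M.Walk v w),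
    (p.append q).edges = p.edges ++ q.edges
  | _, _, _, .nil _, q => rfl
  | _, _, _, .cons e h p, q => by
      simp [Walk.append, Walk.edges, Walk.edges_append p q]

lemma Walk.start_mem_support : ∀ {u v : V} (p : M.Walk u v), u ∈ p.support
  | _, _, .nil v => by simp [Walk.support]
  | _, _, .cons e h p => by simp [Walk.support]

lemma Walk.mem_support_append_left : ∀ {u v w : V} (p : M.Walk u v) (q : M.Walk v w)
    {z : V}, z ∈ p.support → z ∈ (p.append q).support
  | _, _, _, .nil _, q, z, hz => by
      simp only [Walk.support, List.mem_singleton] at hz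
      subst hz; exact q.start_mem_support
  | _, _, _, .cons e h p, q, z, hz => by
      simp only [Walk.support, Walk.append, List.mem_cons] at hz ⊢
      rcases hz with rfl | hz
      · exact Or.inl rfl
      · exact Or.inr (Walk.mem_support_append_left p q hz)

lemma Walk.mem_support_append_right : ∀ {u v w : V} (p : M.Walk u v) (q : M.Walk v w)
    {z : V}, z ∈ q.support → z ∈ (p.append q).support
  | _, _, _, .nil _, q, z, hz => hz
  | _, _, _, .cons e h p, q, z, hz => by
      simp only [Walk.support, Walk.append, List.mem_cons]
      exact Or.inr (Walk.mem_support_append_right p q hz)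

def Walk.reverse : ∀ {u v : V}, M.Walk u v → M.Walk v u
  | _, _, .nil v => .nil v
  | _, _, .cons e h p => p.reverse.append (.cons e (by rw [h, Sym2.eq_swap]) (.nil _))

lemma Walk.edges_reverse : ∀ {u v : V} (p : M.Walk u v),
    p.reverse.edges = p.edges.reverse
  | _, _, .nil v => rfl
  | _, _, .cons e h p => by
      simp [Walk.reverse, Walk.edges_append, Walk.edges, Walk.edges_reverse p]

lemma walk_invariant {P : V → Prop} {R : Set E}
    (hstep : ∀ w z g, P w → g ∉ R → M.inc g = s(w, z) → P z) :
    ∀ {u v : V} (p : M.Walk u v), (∀ e ∈ p.edges, e ∉ R) → P u → P v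
  | _, _, .nil _, _, hu => hu
  | _, _, .cons e h p, hR, hu => by
      have hmem : ∀ f ∈ p.edges, f ∉ R := fun f hf => hR f (by simp [Walk.edges, hf])
      have he : e ∉ R := hR e (by simp [Walk.edges])
      exact walk_invariant hstep p hmem (hstep _ _ e hu he h)

lemma cutLemma [Fintype E] (hess : M.EssentiallyKEdgeConnected 3)
    {e : E} {a b x : V} (hinc : M.inc e = s(a, b))
    (hx : 3 ≤ M.degreeNP x) (hxa : x ≠ a) (hxb : x ≠ b)
    (hcard : (Finset.univ.filter
      (fun g : E => ¬ M.IsPendant g ∧ (a ∈ M.inc g ∨ b ∈ M.inc g) ∧ g ≠ e)).card ≤ 2) :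
    False := by
  classical
  set R : Finset E := Finset.univ.filter
      (fun g : E => ¬ M.IsPendant g ∧ (a ∈ M.inc g ∨ b ∈ M.inc g) ∧ g ≠ e) with hRdef
  have hmemR : ∀ g : E, g ∈ R ↔ ¬ M.IsPendant g ∧ (a ∈ M.inc g ∨ b ∈ M.inc g) ∧ g ≠ e := by
    intro g; simp [hRdef]
  -- endCount bound for members of R
  have hbound : ∀ f ∈ R, M.endCount x f ≤ 1 := by
    intro f hf
    rw [hmemR] at hf
    obtain ⟨p, q, hpq⟩ := exists_rep (M.inc f)
    rw [endCount_eq hpq]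
    have hne : p ≠ x ∨ q ≠ x := by
      rcases hf.2.1 with hm | hm <;> rw [hpq, Sym2.mem_iff] at hm <;>
        rcases hm with rfl | rfl
      · exact Or.inl (Ne.symm hxa)
      · exact Or.inr (Ne.symm hxa)
      · exact Or.inl (Ne.symm hxb)
      · exact Or.inr (Ne.symm hxb)
    rcases hne with hne | hne <;> simp [hne] <;> split_ifs <;> omega
  obtain ⟨f, hfnp, hfR, hfx⟩ := exists_np_not_mem hx hbound hcard
  -- the invariant
  set P : V → Prop := fun w => w = a ∨ w = b ∨
    (M.degree w = 1 ∧ ∀ g' : E, w ∈ M.inc g' → (a ∈ M.inc g' ∨ b ∈ M.inc g')) with hPdef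
  have hae : a ∈ M.inc e := by rw [hinc]; exact Sym2.mem_mk_left a b
  have hbe : b ∈ M.inc e := by rw [hinc]; exact Sym2.mem_mk_right a b
  have hstep : ∀ w z g, P w → g ∉ (↑R : Set E) → M.inc g = s(w, z) → P z := by
    intro w z g hPw hgR hg
    have hwz : w ∈ M.inc g := by rw [hg]; exact Sym2.mem_mk_left w z
    have hzz : z ∈ M.inc g := by rw [hg]; exact Sym2.mem_mk_right w z
    simp only [Finset.mem_coe, hmemR] at hgR
    push_neg at hgR
    by_cases hwS : w = a ∨ w = b
    · -- w is an inner vertex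
      have hwe : w ∈ M.inc e := by rcases hwS with rfl | rfl <;> assumption
      by_cases hge : g = e
      · subst hge
        rw [hinc, Sym2.eq_iff] at hg
        rcases hg with ⟨rfl, rfl⟩ | ⟨rfl, rfl⟩
        · exact Or.inr (Or.inl rfl)
        · exact Or.inl rfl
      · by_cases hgp : M.IsPendant g
        · obtain ⟨ℓ, hℓ, hd1⟩ := hgp
          rw [hg, Sym2.mem_iff] at hℓ
          rcases hℓ with rfl | rfl
          · -- leaf is w; then g = e, contradiction
            exact absurd (eq_of_degree_one hd1 hwz hwe) hge
          · -- leaf is z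
            refine Or.inr (Or.inr ⟨hd1, fun g' hg' => ?_⟩)
            have := eq_of_degree_one hd1 hg' hzz
            subst this
            rcases hwS with rfl | rfl
            · exact Or.inl hwz
            · exact Or.inr hwz
        · -- nonpendant g touching {a,b}, g ≠ e : in R, contradiction
          exfalso
          have : a ∈ M.inc g ∨ b ∈ M.inc g := by
            rcases hwS with rfl | rfl
            · exact Or.inl hwz
            · exact Or.inr hwz
          exact hge (hgR hgp this)
    · push_neg at hwS
      rcases hPw with rfl | rfl | ⟨hd1, hall⟩
      · exact absurd rfl hwS.1
      · exact absurd rfl hwS.2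
      · rcases hall g hwz with hm | hm <;> rw [hg, Sym2.mem_iff] at hm
        · rcases hm with rfl | rfl
          · exact absurd rfl hwS.1
          · exact Or.inl rfl
        · rcases hm with rfl | rfl
          · exact absurd rfl hwS.2
          · exact Or.inr (Or.inl rfl)
  have hnoreach : ¬ M.ReachableOff (↑R) a x := by
    rintro ⟨p, hp⟩
    have hPx : P x := walk_invariant hstep p hp (Or.inl rfl)
    rcases hPx with rfl | rfl | ⟨hd1, -⟩
    · exact hxa rfl
    · exact hxb rfl
    · have := degreeNP_le_degree (M := M) x; omega
  have heR : e ∉ R := by simp [hmemR]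
  have : M.IsEssentialCut R := ⟨e, f, a, x, heR, hfR, hae, hfx, hnoreach⟩
  have := hess R this
  omega

end Multigraph

/-- If the core of an essentially 3-edge-connected multigraph `H` has a spanning
closed trail, then `H` has a dominating closed trail. -/
theorem stmt7 {V E VK EK : Type*} [Fintype E] (M : Multigraph V E)
    (K : Multigraph VK EK) (hess : M.EssentiallyKEdgeConnected 3)
    (hcore : K.IsCoreOf M) (hst : K.HasSpanningClosedTrail) :
    M.HasDominatingClosedTrail := by
  classical
  obtain ⟨φ, ψ, hinj, hφ3, hsurj, hthread, huniq⟩ := hcore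
  obtain ⟨v0, p0, hp0trail, hp0span⟩ := hst
  -- Lift walks of K to walks of M through the threads.
  have lift : ∀ {x y : VK} (p : K.Walk x y), p.IsTrail →
      ∃ q : M.Walk (φ x) (φ y), q.IsTrail ∧
        (∀ e ∈ q.edges, ∃ c ∈ p.edges, e ∈ ψ c) ∧
        (∀ z ∈ p.support, φ z ∈ q.support) := by
    intro x y p
    induction p with
    | nil v =>
        intro _
        exact ⟨.nil _, by simp [Multigraph.Walk.IsTrail, Multigraph.Walk.edges],
          by simp [Multigraph.Walk.edges],
          by simp [Multigraph.Walk.support]⟩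
    | cons c h p ih =>
        rename_i x x' y
        intro htrail
        have hcons : (Multigraph.Walk.cons c h p).edges = c :: p.edges := rfl
        rw [Multigraph.Walk.IsTrail, hcons, List.nodup_cons] at htrail
        obtain ⟨q', hq'trail, hq'orig, hq'supp⟩ := ih htrail.2
        -- a trail realizing the thread of c, in the right direction
        have key : ∃ t₀ : M.Walk (φ x) (φ x'), t₀.IsTrail ∧
            (∀ e ∈ t₀.edges, e ∈ ψ c ∧ ¬ M.IsPendant e) := by
          obtain ⟨xc, yc, hc, t, httrail, -, htnp, htfin, -⟩ := hthread c
          have horient : s(x, x') = s(xc, yc) := h.symm.trans hc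
          rw [Sym2.eq_iff] at horient
          rcases horient with ⟨h1, h2⟩ | ⟨h1, h2⟩
          · subst h1; subst h2
            refine ⟨t, httrail, fun e he => ⟨?_, htnp e he⟩⟩
            rw [← htfin]; exact List.mem_toFinset.mpr he
          · subst h1; subst h2
            refine ⟨t.reverse, ?_, fun e he => ?_⟩
            · rw [Multigraph.Walk.IsTrail, Multigraph.Walk.edges_reverse]
              exact List.nodup_reverse.mpr httrail
            · rw [Multigraph.Walk.edges_reverse, List.mem_reverse] at he
              exact ⟨by rw [← htfin]; exact List.mem_toFinset.mpr he, htnp e he⟩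
        obtain ⟨t₀, ht₀trail, ht₀⟩ := key
        refine ⟨t₀.append q', ?_, ?_, ?_⟩
        · rw [Multigraph.Walk.IsTrail, Multigraph.Walk.edges_append]
          refine List.Nodup.append ht₀trail hq'trail ?_
          intro e het heq
          obtain ⟨hψ, hnp⟩ := ht₀ e het
          obtain ⟨c', hc'p, hc'ψ⟩ := hq'orig e heq
          obtain ⟨c₀, -, hu⟩ := huniq e hnp
          have h1 := hu c hψ
          have h2 := hu c' hc'ψ
          exact htrail.1 ((h2.trans h1.symm) ▸ hc'p)
        · intro e he
          rw [Multigraph.Walk.edges_append, List.mem_append] at he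
          rcases he with he | he
          · exact ⟨c, by simp [hcons], (ht₀ e he).1⟩
          · obtain ⟨c', hc'p, hc'ψ⟩ := hq'orig e he
            exact ⟨c', by simp [hcons, hc'p], hc'ψ⟩
        · intro z hz
          have : (Multigraph.Walk.cons c h p).support = x :: p.support := rfl
          rw [this, List.mem_cons] at hz
          rcases hz with rfl | hz
          · exact Multigraph.Walk.mem_support_append_left t₀ q' t₀.start_mem_support
          · exact Multigraph.Walk.mem_support_append_right t₀ q' (hq'supp z hz)
  obtain ⟨q, hqtrail, -, hqsupp⟩ := lift p0 hp0trail
  refine ⟨φ v0, q, hqtrail, ?_⟩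
  intro e
  obtain ⟨a, b, hab⟩ := Multigraph.exists_rep (M.inc e)
  have hmema : a ∈ M.inc e := by rw [hab]; exact Sym2.mem_mk_left a b
  have hmemb : b ∈ M.inc e := by rw [hab]; exact Sym2.mem_mk_right a b
  by_cases hA : 3 ≤ M.degreeNP a
  · obtain ⟨xA, hxA⟩ := hsurj a hA
    exact ⟨a, hmema, hxA ▸ hqsupp xA (hp0span xA)⟩
  by_cases hB : 3 ≤ M.degreeNP b
  · obtain ⟨xB, hxB⟩ := hsurj b hB
    exact ⟨b, hmemb, hxB ▸ hqsupp xB (hp0span xB)⟩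
  -- otherwise we derive a contradiction using essential 3-edge-connectivity
  exfalso
  push_neg at hA hB
  have hA2 : M.degreeNP a ≤ 2 := by omega
  have hB2 : M.degreeNP b ≤ 2 := by omega
  have hxv : 3 ≤ M.degreeNP (φ v0) := hφ3 v0
  have hxa : φ v0 ≠ a := fun hq => by rw [hq] at hxv; omega
  have hxb : φ v0 ≠ b := fun hq => by rw [hq] at hxv; omega
  refine Multigraph.cutLemma hess hab hxv hxa hxb ?_
  -- the cardinality bound
  have hsub : (Finset.univ.filter
        (fun g : E => ¬ M.IsPendant g ∧ (a ∈ M.inc g ∨ b ∈ M.inc g) ∧ g ≠ e)) ⊆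
      (Finset.univ.filter fun g : E => ¬ M.IsPendant g ∧ a ∈ M.inc g ∧ g ≠ e) ∪
      (Finset.univ.filter fun g : E => ¬ M.IsPendant g ∧ b ∈ M.inc g ∧ g ≠ e) := by
    intro g hg
    simp only [Finset.mem_filter, Finset.mem_union] at hg ⊢
    rcases hg.2.2.1 with hm | hm
    · exact Or.inl ⟨hg.1, hg.2.1, hm, hg.2.2.2⟩
    · exact Or.inr ⟨hg.1, hg.2.1, hm, hg.2.2.2⟩
  refine le_trans (Finset.card_le_card hsub) (le_trans (Finset.card_union_le _ _) ?_)
  by_cases hep : M.IsPendant e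
  · obtain ⟨ℓ, hℓ, hd1⟩ := hep
    rw [hab, Sym2.mem_iff] at hℓ
    have hempty : ∀ w : V, w ∈ M.inc e → M.degree w = 1 →
        (Finset.univ.filter fun g : E => ¬ M.IsPendant g ∧ w ∈ M.inc g ∧ g ≠ e) = ∅ := by
      intro w hwe hw1
      rw [Finset.eq_empty_iff_forall_notMem]
      intro g hg
      simp only [Finset.mem_filter] at hg
      exact hg.2.2.2 (Multigraph.eq_of_degree_one hw1 hg.2.2.1 hwe)
    rcases hℓ with rfl | rfl
    · have h1 := hempty ℓ hmema hd1
      have h2 : (Finset.univ.filter fun g : E => ¬ M.IsPendant g ∧ b ∈ M.inc g ∧ g ≠ e).card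
          ≤ 2 := by
        refine le_trans (Finset.card_le_card ?_) (Multigraph.card_np_le hB2)
        intro g hg
        simp only [Finset.mem_filter] at hg ⊢
        exact ⟨hg.1, hg.2.1, hg.2.2.1⟩
      rw [h1]; simpa using h2
    · have h1 := hempty ℓ hmemb hd1
      have h2 : (Finset.univ.filter fun g : E => ¬ M.IsPendant g ∧ a ∈ M.inc g ∧ g ≠ e).card
          ≤ 2 := by
        refine le_trans (Finset.card_le_card ?_) (Multigraph.card_np_le hA2)
        intro g hg
        simp only [Finset.mem_filter] at hg ⊢
        exact ⟨hg.1, hg.2.1, hg.2.2.1⟩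
      rw [h1]; simpa using h2
  · have h1 := Multigraph.card_np_ne_le hA2 hep hmema
    have h2 := Multigraph.card_np_ne_le hB2 hep hmemb
    omega
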